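/- Let G be a finite non-nilpotent group such that every nontrivial element of G/Z(G) has prime power order. Then |D(G)| ≥ l_M(G/Z(G)) + 1, where l_M(X) denotes the maximum length of chains of subgroups of X and D(G) is the set of relative commutativity degrees of G. -/

import Mathlib

/-- The relative commutativity degree `d(H,G)` of a subgroup `H` of a group `G`. -/
noncomputable def relCommDeg {G : Type*} [Group G] (H : Subgroup G) : ℚ :=
  (Nat.card {p : H × G // (p.1 : G) * p.2 = p.2 * (p.1 : G)} : ℚ) /
    ((Nat.card H : ℚ) * (Nat.card G : ℚ))

/-- The set `D(G)` of all relative commutativity degrees of `G`. -/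
noncomputable def commDegSet (G : Type*) [Group G] : Set ℚ :=
  {q | ∃ H : Subgroup G, relCommDeg H = q}

open Subgroup

section Aux

variable {G : Type*} [Group G]

private lemma card_inf_mul_relindex [Finite G] (A D : Subgroup G) :
    Nat.card ↥(A ⊓ D) * A.relIndex D = Nat.card D := by
  have h1 : Nat.card ((A ⊓ D).subgroupOf D) = Nat.card ↥(A ⊓ D) :=
    Nat.card_congr (subgroupOfEquivOfLe inf_le_right).toEquiv
  have h2 : A.relIndex D = ((A ⊓ D).subgroupOf D).index := by
    rw [inf_subgroupOf_right]; rfl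
  rw [h2, ← h1]
  exact Subgroup.card_mul_index _

private lemma term_le [Finite G] {A B : Subgroup G} (C : Subgroup G) (hAB : A ≤ B) :
    Nat.card ↥(B ⊓ C) * Nat.card A ≤ Nat.card ↥(A ⊓ C) * Nat.card B := by
  have hneB : A.relIndex B ≠ 0 := by
    rw [Subgroup.relIndex]; exact Subgroup.index_ne_zero_of_finite
  have h3 : A.relIndex (B ⊓ C) ≤ A.relIndex B :=
    Subgroup.relIndex_le_of_le_right inf_le_left hneB
  have e1 : Nat.card ↥(A ⊓ (B ⊓ C)) * A.relIndex (B ⊓ C) = Nat.card ↥(B ⊓ C) :=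
    card_inf_mul_relindex A (B ⊓ C)
  have hAinf : A ⊓ (B ⊓ C) = A ⊓ C := by rw [← inf_assoc, inf_of_le_left hAB]
  rw [hAinf] at e1
  have e2 : Nat.card ↥(A ⊓ B) * A.relIndex B = Nat.card B := card_inf_mul_relindex A B
  rw [inf_of_le_left hAB] at e2
  calc Nat.card ↥(B ⊓ C) * Nat.card A
      = Nat.card ↥(A ⊓ C) * A.relIndex (B ⊓ C) * Nat.card A := by rw [e1]
    _ ≤ Nat.card ↥(A ⊓ C) * A.relIndex B * Nat.card A :=
        Nat.mul_le_mul_right _ (Nat.mul_le_mul_left _ h3)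
    _ = Nat.card ↥(A ⊓ C) * (Nat.card ↥A * A.relIndex B) := by ring
    _ = Nat.card ↥(A ⊓ C) * Nat.card B := by rw [e2]

set_option maxHeartbeats 1000000 in
private lemma card_pairs [Fintype G] (H : Subgroup G) :
    Nat.card {p : H × G // (p.1 : G) * p.2 = p.2 * (p.1 : G)} =
      ∑ g : G, Nat.card ↥(H ⊓ centralizer {g}) := by
  classical
  have e : {p : H × G // (p.1 : G) * p.2 = p.2 * (p.1 : G)} ≃
      Σ g : G, ↥(H ⊓ centralizer {g}) :=
    { toFun := fun p => ⟨p.1.2, ⟨(p.1.1 : G), Subgroup.mem_inf.mpr ⟨p.1.1.2,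
        Subgroup.mem_centralizer_singleton_iff.mpr p.2⟩⟩⟩
      invFun := fun x => ⟨(⟨(x.2 : G), (Subgroup.mem_inf.mp x.2.2).1⟩, x.1),
        Subgroup.mem_centralizer_singleton_iff.mp (Subgroup.mem_inf.mp x.2.2).2⟩
      left_inv := fun p => rfl
      right_inv := fun x => rfl }
  rw [Nat.card_congr e, Nat.card_eq_fintype_card, Fintype.card_sigma]
  exact Finset.sum_congr rfl fun g _ => (Nat.card_eq_fintype_card).symm

private lemma card_eq_center_mul [Finite G] (S : Subgroup G) (hS : center G ≤ S) :
    Nat.card S =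
      Nat.card (center G) * Nat.card ↥(S.map (QuotientGroup.mk' (center G))) := by
  have h1 := card_inf_mul_relindex (center G) S
  rw [inf_of_le_left hS] at h1
  rw [← h1]
  congr 1
  have h2 : (QuotientGroup.mk' (center G)).ker.relIndex S =
      Nat.card ↥(S.map (QuotientGroup.mk' (center G))) := Subgroup.relIndex_ker (K := S) (QuotientGroup.mk' (center G))
  rwa [QuotientGroup.ker_mk'] at h2

private lemma not_isPrimePow_mul {s r k : ℕ} (hs : s.Prime) (hr : r.Prime)
    (hsr : s ≠ r) (hk : 0 < k) : ¬ IsPrimePow (s ^ k * r) := by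
  rintro ⟨u, v, hu, hv, huv⟩
  have huN : u.Prime := Nat.prime_iff.mpr hu
  have hsdvd : s ∣ u ^ v := by
    rw [huv]; exact dvd_mul_of_dvd_left (dvd_pow_self s hk.ne') r
  have hrdvd : r ∣ u ^ v := by rw [huv]; exact dvd_mul_left r _
  have hs_u : s = u := (Nat.prime_dvd_prime_iff_eq hs huN).mp (hs.dvd_of_dvd_pow hsdvd)
  have hr_u : r = u := (Nat.prime_dvd_prime_iff_eq hr huN).mp (hr.dvd_of_dvd_pow hrdvd)
  exact hsr (hs_u.trans hr_u.symm)

private lemma pgroup_centralizer {Q : Type*} [Group Q]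
    (hpp : ∀ g : Q, g ≠ 1 → IsPrimePow (orderOf g))
    {r : ℕ} (hr : r.Prime) {x : Q} (hx : orderOf x = r) :
    IsPGroup r (centralizer ({x} : Set Q)) := by
  intro a
  rcases eq_or_ne (a : Q) 1 with h1 | h1
  · exact ⟨0, Subtype.ext (by simp [h1])⟩
  · obtain ⟨s, k, hs, hk, hsk⟩ := hpp (a : Q) h1
    have hsN : s.Prime := Nat.prime_iff.mpr hs
    by_cases hsr : s = r
    · refine ⟨k, Subtype.ext ?_⟩
      have : ((a : Q)) ^ (r ^ k) = 1 := by
        rw [← hsr, hsk]; exact pow_orderOf_eq_one _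
      simpa using this
    · exfalso
      have hcomm : Commute (a : Q) x := Subgroup.mem_centralizer_singleton_iff.mp a.2
      have hco : Nat.Coprime (orderOf (a : Q)) (orderOf x) := by
        rw [← hsk, hx]
        exact Nat.Coprime.pow_left k (((Nat.coprime_primes hsN hr).mpr hsr))
      have hord := hcomm.orderOf_mul_eq_mul_orderOf_of_coprime hco
      rw [← hsk, hx] at hord
      have hne1 : (a : Q) * x ≠ 1 := by
        intro h
        rw [h, orderOf_one] at hord
        have : r ∣ 1 := ⟨s ^ k, by rw [hord]; ring⟩
        exact hr.one_lt.ne' (Nat.dvd_one.mp this)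
      have hppm := hpp _ hne1
      rw [hord] at hppm
      exact not_isPrimePow_mul hsN hr hsr hk hppm

private lemma exists_two_primes {n : ℕ} (h0 : n ≠ 0) (h1 : n ≠ 1) (h : ¬ IsPrimePow n) :
    ∃ p q : ℕ, p.Prime ∧ q.Prime ∧ p ≠ q ∧ p ∣ n ∧ q ∣ n := by
  by_contra hc
  push_neg at hc
  apply h
  have hp : n.minFac.Prime := Nat.minFac_prime h1
  have hdvd : n.minFac ∣ n := Nat.minFac_dvd n
  have heq : n = n.minFac ^ n.primeFactorsList.length :=
    Nat.eq_prime_pow_of_unique_prime_dvd h0 (fun {d} hd hdn => by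
      by_contra hne
      exact hc n.minFac d hp hd (fun hh => hne hh.symm) hdvd hdn)
  refine ⟨n.minFac, n.primeFactorsList.length, Nat.prime_iff.mp hp, ?_, heq.symm⟩
  rcases Nat.eq_zero_or_pos n.primeFactorsList.length with hl | hl
  · exfalso; rw [hl, pow_zero] at heq; exact h1 heq
  · exact hl

end Aux

section Main

variable {G : Type*} [Group G] [Finite G]

private lemma no_term_eq (hnil : ¬ Group.IsNilpotent G)
    (hpp : ∀ g : G ⧸ Subgroup.center G, g ≠ 1 → IsPrimePow (orderOf g))
    {H K : Subgroup G} (hZ : center G ≤ H) (hHK : H < K)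
    (heq : ∀ g : G, Nat.card ↥(K ⊓ centralizer {g}) * Nat.card H
        = Nat.card ↥(H ⊓ centralizer {g}) * Nat.card K) : False := by
  set Q := G ⧸ center G with hQdef
  set mk : G →* Q := QuotientGroup.mk' (center G) with hmkdef
  have hsurj : Function.Surjective mk := QuotientGroup.mk'_surjective _
  have hZK : center G ≤ K := hZ.trans hHK.le
  -- the quotient is neither trivial nor of prime power order
  have hQnil : ¬ Group.IsNilpotent Q := fun h => hnil (of_quotient_center_nilpotent h)
  have hQ0 : Nat.card Q ≠ 0 := Nat.card_pos.ne'
  have hQ1 : Nat.card Q ≠ 1 := by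
    intro h
    have hsub : Subsingleton Q := (Nat.card_eq_one_iff_unique.mp h).1
    have hss : Subsingleton (Subgroup Q) := ⟨fun a b => by
      ext x
      rw [Subsingleton.elim x 1]
      simp [Subgroup.one_mem]⟩
    exact hQnil ⟨0, Subsingleton.elim _ _⟩
  have hQpp : ¬ IsPrimePow (Nat.card Q) := by
    rintro ⟨p, k, hp, hk, hpk⟩
    haveI : Fact (Nat.Prime p) := ⟨Nat.prime_iff.mpr hp⟩
    have : IsPGroup p Q := IsPGroup.iff_card.mpr ⟨k, hpk.symm⟩
    exact hQnil this.isNilpotent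
  obtain ⟨p, q, hp, hq, hpq, hpd, hqd⟩ := exists_two_primes hQ0 hQ1 hQpp
  -- the index m = |K|/|H|
  obtain ⟨m, hm⟩ := Subgroup.card_dvd_of_le hHK.le
  -- key divisibility for each prime dividing |Q|
  have key : ∀ r : ℕ, r.Prime → r ∣ Nat.card Q → ∃ t : ℕ, m ∣ r ^ t := by
    intro r hr hrd
    haveI : Fact (Nat.Prime r) := ⟨hr⟩
    letI : Fintype Q := Fintype.ofFinite Q
    obtain ⟨x, hx⟩ := exists_prime_orderOf_dvd_card (G := Q) r
      (by rwa [← Nat.card_eq_fintype_card])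
    obtain ⟨g, hg⟩ := hsurj x
    set C := centralizer ({g} : Set G) with hCdef
    have hpg : IsPGroup r (centralizer ({x} : Set Q)) := pgroup_centralizer hpp hr hx
    obtain ⟨t, ht⟩ := IsPGroup.iff_card.mp hpg
    refine ⟨t, ?_⟩
    have hZC : center G ≤ C := Subgroup.center_le_centralizer _
    have hZKC : center G ≤ K ⊓ C := le_inf hZK hZC
    have hZHC : center G ≤ H ⊓ C := le_inf hZ hZC
    have eK := card_eq_center_mul K hZK
    have eH := card_eq_center_mul H hZ
    have eKC := card_eq_center_mul (K ⊓ C) hZKC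
    have eHC := card_eq_center_mul (H ⊓ C) hZHC
    set z := Nat.card (center G) with hzdef
    have hz : 0 < z := Nat.card_pos
    set h' := Nat.card ↥(H.map mk) with hh'def
    set k' := Nat.card ↥(K.map mk) with hk'def
    set a' := Nat.card ↥((H ⊓ C).map mk) with ha'def
    set b' := Nat.card ↥((K ⊓ C).map mk) with hb'def
    have hh' : 0 < h' := Nat.card_pos
    -- from heq g : (z*b')*(z*h') = (z*a')*(z*k')
    have heq' : b' * h' = a' * k' := by
      have hg2 := heq g
      rw [eK, eH, eKC, eHC] at hg2
      have h3 : (z * z) * (b' * h') = (z * z) * (a' * k') := by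
        calc (z * z) * (b' * h') = z * b' * (z * h') := by ring
          _ = z * a' * (z * k') := hg2
          _ = (z * z) * (a' * k') := by ring
      exact Nat.eq_of_mul_eq_mul_left (Nat.mul_pos hz hz) h3
    -- k' = h' * m
    have hk'm : k' = h' * m := by
      have : z * k' = (z * h') * m := by rw [← eK, ← eH, hm]
      rw [mul_assoc] at this
      exact Nat.eq_of_mul_eq_mul_left hz this
    -- b' = a' * m
    have hb'm : b' = a' * m := by
      have : b' * h' = (a' * m) * h' := by rw [heq', hk'm]; ring
      exact Nat.eq_of_mul_eq_mul_right hh' this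
    -- b' divides r ^ t
    have hble : (K ⊓ C).map mk ≤ centralizer ({x} : Set Q) := by
      rintro y ⟨s, hs, rfl⟩
      have hsC : s ∈ C := (Subgroup.mem_inf.mp hs).2
      have hcomm : s * g = g * s := Subgroup.mem_centralizer_singleton_iff.mp hsC
      refine Subgroup.mem_centralizer_singleton_iff.mpr ?_
      rw [← hg]
      have : mk (s * g) = mk (g * s) := by rw [hcomm]
      simpa [map_mul] using this
    have hbdvd : b' ∣ r ^ t := by
      rw [← ht]
      exact Subgroup.card_dvd_of_le hble
    exact dvd_trans (Dvd.intro_left a' hb'm.symm) hbdvd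
  obtain ⟨t1, ht1⟩ := key p hp hpd
  obtain ⟨t2, ht2⟩ := key q hq hqd
  have hco : Nat.Coprime (p ^ t1) (q ^ t2) :=
    Nat.Coprime.pow t1 t2 ((Nat.coprime_primes hp hq).mpr hpq)
  have hmd : m ∣ Nat.gcd (p ^ t1) (q ^ t2) := Nat.dvd_gcd ht1 ht2
  rw [Nat.coprime_iff_gcd_eq_one.mp hco] at hmd
  have hm1 : m = 1 := Nat.dvd_one.mp hmd
  rw [hm1, mul_one] at hm
  exact hHK.ne (Subgroup.eq_of_le_of_card_ge hHK.le hm.le)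

private lemma relCommDeg_lt (hnil : ¬ Group.IsNilpotent G)
    (hpp : ∀ g : G ⧸ Subgroup.center G, g ≠ 1 → IsPrimePow (orderOf g))
    {H K : Subgroup G} (hZ : center G ≤ H) (hHK : H < K) :
    relCommDeg K < relCommDeg H := by
  letI : Fintype G := Fintype.ofFinite G
  set nH := Nat.card {p : H × G // (p.1 : G) * p.2 = p.2 * (p.1 : G)} with hnH
  set nK := Nat.card {p : K × G // (p.1 : G) * p.2 = p.2 * (p.1 : G)} with hnK
  have hle : ∀ g : G, Nat.card ↥(K ⊓ centralizer {g}) * Nat.card H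
      ≤ Nat.card ↥(H ⊓ centralizer {g}) * Nat.card K := fun g => term_le _ hHK.le
  have hsumK : nK * Nat.card H = ∑ g : G, Nat.card ↥(K ⊓ centralizer {g}) * Nat.card H := by
    rw [hnK, card_pairs, Finset.sum_mul]
  have hsumH : nH * Nat.card K = ∑ g : G, Nat.card ↥(H ⊓ centralizer {g}) * Nat.card K := by
    rw [hnH, card_pairs, Finset.sum_mul]
  have hsum_le : nK * Nat.card H ≤ nH * Nat.card K := by
    rw [hsumK, hsumH]
    exact Finset.sum_le_sum fun g _ => hle g
  have hkey : nK * Nat.card H < nH * Nat.card K := by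
    rcases lt_or_eq_of_le hsum_le with h | h
    · exact h
    · exfalso
      rw [hsumK, hsumH] at h
      have hterm := (Finset.sum_eq_sum_iff_of_le fun g _ => hle g).mp h
      exact no_term_eq hnil hpp hZ hHK fun g => hterm g (Finset.mem_univ g)
  have hGpos : (0 : ℚ) < (Nat.card G : ℚ) := by exact_mod_cast Nat.card_pos
  have hHpos : (0 : ℚ) < (Nat.card H : ℚ) := by exact_mod_cast Nat.card_pos
  have hKpos : (0 : ℚ) < (Nat.card K : ℚ) := by exact_mod_cast Nat.card_pos
  rw [relCommDeg, relCommDeg, div_lt_div_iff₀ (by positivity) (by positivity)]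
  have : ((nK * Nat.card H : ℕ) : ℚ) * (Nat.card G : ℚ)
      < ((nH * Nat.card K : ℕ) : ℚ) * (Nat.card G : ℚ) := by
    have : ((nK * Nat.card H : ℕ) : ℚ) < ((nH * Nat.card K : ℕ) : ℚ) := by
      exact_mod_cast hkey
    exact mul_lt_mul_of_pos_right this hGpos
  push_cast at this ⊢
  linear_combination this

end Main

theorem commDegSet_ncard_ge_chain_length (G : Type*) [Group G] [Finite G]
    (hnil : ¬ Group.IsNilpotent G)
    (hpp : ∀ g : G ⧸ Subgroup.center G, g ≠ 1 → IsPrimePow (orderOf g)) :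
    ∀ (n : ℕ) (c : Fin (n + 1) → Subgroup (G ⧸ Subgroup.center G)),
      StrictMono c → n + 1 ≤ (commDegSet G).ncard := by
  intro n c hc
  classical
  set mk : G →* G ⧸ center G := QuotientGroup.mk' (center G) with hmkdef
  have hsurj : Function.Surjective mk := QuotientGroup.mk'_surjective _
  set Hc : Fin (n + 1) → Subgroup G := fun i => (c i).comap mk with hHcdef
  have hZ : ∀ i, center G ≤ Hc i := fun i => by
    have h1 : mk.ker ≤ (c i).comap mk := Subgroup.ker_le_comap (f := mk) (c i)
    rwa [QuotientGroup.ker_mk'] at h1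
  have hmono : StrictMono Hc := fun i j hij =>
    (Subgroup.comap_lt_comap_of_surjective hsurj).mpr (hc hij)
  set f : Fin (n + 1) → ℚ := fun i => relCommDeg (Hc i) with hfdef
  have hanti : StrictAnti f := fun i j hij =>
    relCommDeg_lt hnil hpp (hZ i) (hmono hij)
  have hinj : Function.Injective f := hanti.injective
  have hfin : (commDegSet G).Finite := by
    haveI : Finite (Subgroup G) := Finite.of_injective _ (SetLike.coe_injective (A := Subgroup G))
    have : commDegSet G = Set.range (fun H : Subgroup G => relCommDeg H) := by
      ext x; exact ⟨fun ⟨H, hH⟩ => ⟨H, hH⟩, fun ⟨H, hH⟩ => ⟨H, hH⟩⟩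
    rw [this]
    exact Set.finite_range _
  have hsub : (↑(Finset.univ.image f) : Set ℚ) ⊆ commDegSet G := by
    intro x hx
    simp only [Finset.coe_image, Finset.coe_univ, Set.image_univ, Set.mem_range] at hx
    obtain ⟨i, hi⟩ := hx
    exact ⟨Hc i, hi⟩
  calc n + 1 = (Finset.univ.image f).card := by
        rw [Finset.card_image_of_injective _ hinj, Finset.card_univ, Fintype.card_fin]
    _ = (↑(Finset.univ.image f) : Set ℚ).ncard := (Set.ncard_coe_finset _).symm
    _ ≤ (commDegSet G).ncard := Set.ncard_le_ncard hsub hfin
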